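/- For a pair of permutations ρ₁, ρ₂ of a finite set V, let G(ρ₁,ρ₂) be the directed multigraph with edges i→ρ₁(i) and i→ρ₂(i) for all i∈V, and let C(ρ₁,ρ₂) be its adjacency matrix (with entry 2 when ρ₁(i)=ρ₂(i)). Let ρ₀ = ρ₂∘ρ₁⁻¹. Then det C(ρ₁,ρ₂) = 0 if ρ₀ has at least one cycle of even length, and det C(ρ₁,ρ₂) = sign(ρ₁)·2^{c(ρ₀)} otherwise, where c(ρ₀) is the number of cycles of ρ₀ (including fixed points). -/

import Mathlib

/-- The adjacency matrix of the graph `G(ρ₁,ρ₂)` with edges `i → ρ₁ i` and `i → ρ₂ i`. -/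
def permPairAdjMatrix {V : Type*} [Fintype V] [DecidableEq V] (ρ₁ ρ₂ : Equiv.Perm V) :
    Matrix V V ℤ :=
  fun i j => (if ρ₁ i = j then 1 else 0) + (if ρ₂ i = j then 1 else 0)

/-- The number of cycles (orbits, including fixed points) of a permutation. -/
def cycleCount {V : Type*} [Fintype V] [DecidableEq V] (σ : Equiv.Perm V) : ℕ :=
  (Fintype.card V - σ.cycleType.sum) + σ.cycleType.card

open Equiv Matrix Finset

section Aux

variable {V : Type*} [Fintype V] [DecidableEq V]

lemma permMatrix_apply_ite (σ : Equiv.Perm V) (i j : V) :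
    σ.permMatrix ℤ i j = if σ i = j then 1 else 0 := by
  rw [Equiv.Perm.permMatrix, PEquiv.toMatrix_toPEquiv_apply, Pi.single_apply]
  exact if_congr eq_comm rfl rfl

lemma permMatrix_mul (σ τ : Equiv.Perm V) :
    σ.permMatrix ℤ * τ.permMatrix ℤ = (τ * σ).permMatrix ℤ := by
  rw [Equiv.Perm.permMatrix, Equiv.Perm.permMatrix, ← PEquiv.toMatrix_trans,
    ← Equiv.toPEquiv_trans]
  rfl

/-- If every value of `τ` is `i` or `σ⁻¹ i` for a cycle `σ`, then `τ = 1` or `τ = σ⁻¹`. -/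
lemma perm_eq_one_or_inv (σ τ : Equiv.Perm V) (hσ : σ.IsCycle)
    (h : ∀ i, τ i = i ∨ τ i = σ⁻¹ i) : τ = 1 ∨ τ = σ⁻¹ := by
  by_cases h1 : τ = 1
  · exact Or.inl h1
  right
  obtain ⟨i₀, hi₀⟩ : ∃ i, τ i ≠ i := by
    by_contra hc
    push_neg at hc
    exact h1 (Equiv.ext hc)
  -- nonfixed points of τ are closed under σ⁻¹
  have step : ∀ x, τ x ≠ x → τ (σ⁻¹ x) ≠ σ⁻¹ x := by
    intro x hx
    have hx' : τ x = σ⁻¹ x := (h x).resolve_left hx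
    have hne : σ⁻¹ x ≠ x := fun e => hx (by rw [hx', e])
    intro e
    exact hne (τ.injective (by rw [e, hx']))
  have hpow : ∀ k : ℕ, τ ((σ⁻¹ ^ k) i₀) ≠ (σ⁻¹ ^ k) i₀ := by
    intro k
    induction k with
    | zero => simpa using hi₀
    | succ n ih =>
      rw [pow_succ']
      rw [Equiv.Perm.mul_apply]
      exact step _ ih
  have hinv : σ⁻¹.IsCycle := hσ.inv
  have hi₀inv : σ⁻¹ i₀ ≠ i₀ := by
    have hx' : τ i₀ = σ⁻¹ i₀ := (h i₀).resolve_left hi₀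
    intro e; exact hi₀ (by rw [hx', e])
  ext y
  by_cases hy : σ⁻¹ y = y
  · -- y fixed by σ, hence τ y = y = σ⁻¹ y
    rcases h y with h' | h'
    · rw [h', hy]
    · rw [h']
  · obtain ⟨k, hk⟩ := hinv.exists_pow_eq hi₀inv hy
    have := hpow k
    rw [hk] at this
    exact (h y).resolve_left this

/-- Determinant of `1 + P(σ)` for a cycle `σ`. -/
lemma det_one_add_permMatrix_cycle (σ : Equiv.Perm V) (hσ : σ.IsCycle) :
    (1 + σ.permMatrix ℤ).det =
      2 ^ (Fintype.card V - σ.support.card) * (1 - (-1 : ℤ) ^ σ.support.card) := by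
  classical
  set M : Matrix V V ℤ := 1 + σ.permMatrix ℤ with hM
  have hMapply : ∀ a b, M a b = (if a = b then 1 else 0) + (if σ a = b then 1 else 0) := by
    intro a b
    rw [hM, Matrix.add_apply, Matrix.one_apply, permMatrix_apply_ite]
  have hσinv_ne : σ⁻¹ ≠ 1 := fun e => hσ.ne_one (by simpa [inv_eq_one] using e)
  have hone_ne : (1 : Equiv.Perm V) ≠ σ⁻¹ := fun e => hσinv_ne e.symm
  -- the diagonal-ish product for τ = 1 and τ = σ⁻¹
  have hfixcard : (Finset.univ.filter fun i => σ i = i).card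
      = Fintype.card V - σ.support.card := by
    have h1 : σ.support = Finset.univ.filter fun i => ¬ σ i = i := by
      ext x; simp [Equiv.Perm.mem_support]
    have h2 := Finset.card_filter_add_card_filter_not
      (s := (Finset.univ : Finset V)) (p := fun i => σ i = i)
    rw [Finset.card_univ] at h2
    have h3 := congrArg Finset.card h1
    omega
  have hprod1 : (∏ i, M i i) = 2 ^ (Fintype.card V - σ.support.card) := by
    have : ∀ i, M i i = if σ i = i then 2 else 1 := by
      intro i
      rw [hMapply]
      by_cases h : σ i = i <;> simp [h]
    rw [Finset.prod_congr rfl fun i _ => this i, Finset.prod_ite, Finset.prod_const,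
      Finset.prod_const, one_pow, mul_one, hfixcard]
  have hprodinv : (∏ i, M (σ⁻¹ i) i) = 2 ^ (Fintype.card V - σ.support.card) := by
    have : ∀ i, M (σ⁻¹ i) i = if σ i = i then 2 else 1 := by
      intro i
      rw [hMapply]
      have hs : σ (σ⁻¹ i) = i := Equiv.apply_symm_apply σ i
      by_cases h : σ i = i
      · have h' : σ⁻¹ i = i := σ.injective (by rw [hs, h])
        rw [if_pos h', if_pos hs, if_pos h]
        norm_num
      · have h' : ¬ σ⁻¹ i = i := by
          intro e
          have he := congrArg σ e
          rw [hs] at he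
          exact h he.symm
        rw [if_neg h', if_pos hs, if_neg h]
        norm_num
    rw [Finset.prod_congr rfl fun i _ => this i, Finset.prod_ite, Finset.prod_const,
      Finset.prod_const, one_pow, mul_one, hfixcard]
  -- vanishing of the other terms
  have hvanish : ∀ τ : Equiv.Perm V, τ ∉ ({1, σ⁻¹} : Finset (Equiv.Perm V)) →
      ((Equiv.Perm.sign τ : ℤ) * ∏ x, M (τ x) x) = 0 := by
    intro τ hτ
    simp only [Finset.mem_insert, Finset.mem_singleton] at hτ
    push_neg at hτ
    have : ¬ ∀ i, τ i = i ∨ τ i = σ⁻¹ i := by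
      intro hall
      rcases perm_eq_one_or_inv σ τ hσ hall with h | h
      · exact hτ.1 h
      · exact hτ.2 h
    push_neg at this
    obtain ⟨i, hi1, hi2⟩ := this
    have hzero : M (τ i) i = 0 := by
      rw [hMapply]
      have e1 : ¬ τ i = i := hi1
      have e2 : ¬ σ (τ i) = i := by
        intro e
        exact hi2 (σ.injective (by rw [e]; simp))
      simp [e1, e2]
    have hz : (∏ x, M (τ x) x) = 0 := Finset.prod_eq_zero (Finset.mem_univ i) hzero
    rw [hz, mul_zero]
  -- assemble
  rw [Matrix.det_apply']
  simp only [Int.cast_id]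
  rw [← Finset.sum_subset (Finset.subset_univ ({1, σ⁻¹} : Finset (Equiv.Perm V)))
    (fun τ _ hτ => hvanish τ hτ)]
  rw [Finset.sum_insert (by simpa using hone_ne), Finset.sum_singleton]
  have hsign : (Equiv.Perm.sign σ⁻¹ : ℤ) = -(-1 : ℤ) ^ σ.support.card := by
    rw [map_inv]
    simp [hσ.sign]
  simp only [Equiv.Perm.one_apply, _root_.map_one, Units.val_one, one_mul]
  rw [hprod1, hsign, hprodinv]
  ring

/-- The key matrix identity for disjoint permutations. -/
lemma one_add_mul_one_add (σ τ : Equiv.Perm V) (h : Equiv.Perm.Disjoint σ τ) :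
    (1 + σ.permMatrix ℤ) * (1 + τ.permMatrix ℤ) = (2 : ℤ) • (1 + (σ * τ).permMatrix ℤ) := by
  have hsum : σ.permMatrix ℤ + τ.permMatrix ℤ = 1 + (σ * τ).permMatrix ℤ := by
    ext i j
    simp only [Matrix.add_apply, permMatrix_apply_ite, Matrix.one_apply,
      Equiv.Perm.mul_apply]
    rcases h i with hi | hi
    · -- σ i = i ; then σ (τ i) = τ i
      have hστ : σ (τ i) = τ i := by
        rcases h (τ i) with h' | h'
        · exact h'
        · have : τ i = i := τ.injective h'
          rw [this, hi]
      simp only [hi, hστ]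
    · have hστ : σ (τ i) = σ i := by rw [hi]
      simp only [hi, hστ]
      ring
  have hcom : τ * σ = σ * τ := (h.commute.eq).symm
  calc (1 + σ.permMatrix ℤ) * (1 + τ.permMatrix ℤ)
      = 1 + (σ.permMatrix ℤ + τ.permMatrix ℤ) + σ.permMatrix ℤ * τ.permMatrix ℤ := by
        noncomm_ring
    _ = 1 + (1 + (σ * τ).permMatrix ℤ) + (σ * τ).permMatrix ℤ := by
        rw [hsum, _root_.permMatrix_mul, hcom]
    _ = (2 : ℤ) • (1 + (σ * τ).permMatrix ℤ) := by
        rw [two_smul]; abel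

/-- Determinant of `1 + P(σ)` in general. -/
lemma det_one_add_permMatrix (σ : Equiv.Perm V) :
    (1 + σ.permMatrix ℤ).det =
      2 ^ (Fintype.card V - σ.cycleType.sum) *
        ((σ.cycleType.map fun ℓ => 1 - (-1 : ℤ) ^ ℓ).prod) := by
  classical
  induction σ using Equiv.Perm.cycle_induction_on with
  | base_one =>
    have h1 : (1 : Equiv.Perm V).permMatrix ℤ = 1 := by
      ext i j
      rw [permMatrix_apply_ite, Matrix.one_apply]
      rfl
    rw [h1]
    have : (1 + 1 : Matrix V V ℤ) = (2 : ℤ) • (1 : Matrix V V ℤ) := by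
      rw [two_smul]
    rw [this, Matrix.det_smul, Matrix.det_one, mul_one]
    simp [Equiv.Perm.cycleType_one]
  | base_cycles σ hσ =>
    rw [det_one_add_permMatrix_cycle σ hσ, hσ.cycleType]
    simp
  | induction_disjoint σ τ hd _ ih1 ih2 =>
    have hdet : (1 + σ.permMatrix ℤ).det * (1 + τ.permMatrix ℤ).det
        = 2 ^ Fintype.card V * (1 + (σ * τ).permMatrix ℤ).det := by
      rw [← Matrix.det_mul, one_add_mul_one_add σ τ hd, Matrix.det_smul]
    set n := Fintype.card V
    have ha : σ.cycleType.sum = σ.support.card := σ.sum_cycleType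
    have hb : τ.cycleType.sum = τ.support.card := τ.sum_cycleType
    have habn : σ.support.card + τ.support.card ≤ n := by
      rw [← hd.card_support_mul]
      exact (Finset.card_le_univ _).trans_eq (Finset.card_univ)
    have hct : (σ * τ).cycleType = σ.cycleType + τ.cycleType := hd.cycleType_mul
    rw [ih1, ih2] at hdet
    have hexp : (n - σ.cycleType.sum) + (n - τ.cycleType.sum)
        = n + (n - (σ.cycleType + τ.cycleType).sum) := by
      rw [Multiset.sum_add]
      omega
    have h2n : (2 : ℤ) ^ n ≠ 0 := pow_ne_zero _ two_ne_zero
    apply mul_left_cancel₀ h2n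
    rw [← hdet]
    rw [hct, Multiset.map_add, Multiset.prod_add]
    rw [show (2:ℤ) ^ n * (2 ^ (n - (σ.cycleType + τ.cycleType).sum) *
        ((Multiset.map (fun ℓ => 1 - (-1:ℤ) ^ ℓ) σ.cycleType).prod *
         (Multiset.map (fun ℓ => 1 - (-1:ℤ) ^ ℓ) τ.cycleType).prod))
      = ((2:ℤ) ^ n * 2 ^ (n - (σ.cycleType + τ.cycleType).sum)) *
        ((Multiset.map (fun ℓ => 1 - (-1:ℤ) ^ ℓ) σ.cycleType).prod *
         (Multiset.map (fun ℓ => 1 - (-1:ℤ) ^ ℓ) τ.cycleType).prod) from by ring]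
    rw [← pow_add, ← hexp, pow_add]
    ring

lemma prod_map_eq_pow_card {s : Multiset ℕ} {f : ℕ → ℤ} (h : ∀ x ∈ s, f x = 2) :
    (s.map f).prod = 2 ^ Multiset.card s := by
  induction s using Multiset.induction with
  | empty => simp
  | cons a t ih =>
    rw [Multiset.map_cons, Multiset.prod_cons, h a (Multiset.mem_cons_self a t),
      ih fun x hx => h x (Multiset.mem_cons_of_mem hx)]
    rw [Multiset.card_cons, pow_succ]
    ring

end Aux

theorem det_permPairAdjMatrix {V : Type*} [Fintype V] [DecidableEq V]
    (ρ₁ ρ₂ : Equiv.Perm V) (ρ₀ : Equiv.Perm V) (hρ₀ : ρ₀ = ρ₂ * ρ₁⁻¹) :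
    ((∃ l ∈ ρ₀.cycleType, Even l) → (permPairAdjMatrix ρ₁ ρ₂).det = 0) ∧
    ((∀ l ∈ ρ₀.cycleType, Odd l) →
      (permPairAdjMatrix ρ₁ ρ₂).det = (Equiv.Perm.sign ρ₁ : ℤ) * 2 ^ cycleCount ρ₀) := by
  classical
  have hfact : permPairAdjMatrix ρ₁ ρ₂ = ρ₁.permMatrix ℤ * (1 + ρ₀.permMatrix ℤ) := by
    have h2 : ρ₁.permMatrix ℤ * (1 + ρ₀.permMatrix ℤ)
        = ρ₁.permMatrix ℤ + ρ₂.permMatrix ℤ := by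
      rw [mul_add, mul_one, _root_.permMatrix_mul]
      congr 1
      rw [hρ₀, inv_mul_cancel_right]
    rw [h2]
    ext i j
    simp [permPairAdjMatrix, Matrix.add_apply, Equiv.toPEquiv_apply]
  have hdet : (permPairAdjMatrix ρ₁ ρ₂).det
      = (Equiv.Perm.sign ρ₁ : ℤ) * (1 + ρ₀.permMatrix ℤ).det := by
    rw [hfact, Matrix.det_mul, Matrix.det_permutation]
    norm_cast
  constructor
  · rintro ⟨l, hl, hleven⟩
    rw [hdet, det_one_add_permMatrix]
    have hzero : (Multiset.map (fun ℓ => 1 - (-1 : ℤ) ^ ℓ) ρ₀.cycleType).prod = 0 := by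
      apply Multiset.prod_eq_zero
      rw [Multiset.mem_map]
      exact ⟨l, hl, by rw [hleven.neg_one_pow]; ring⟩
    rw [hzero]
    ring
  · intro hodd
    rw [hdet, det_one_add_permMatrix]
    have htwo : (Multiset.map (fun ℓ => 1 - (-1 : ℤ) ^ ℓ) ρ₀.cycleType).prod
        = 2 ^ Multiset.card ρ₀.cycleType := by
      apply prod_map_eq_pow_card
      intro x hx
      rw [(hodd x hx).neg_one_pow]
      ring
    rw [htwo, cycleCount, pow_add]
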